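/- Let t ≥ 3 and k ≥ 1 be integers, let G be a finite simple graph that is K_{3,t}-forbidden, and let I_0 and I_r be independent sets of G with |I_0| = |I_r| = k. Suppose N is a set of vertices of G disjoint from I_0 ∪ I_r with |N| ≥ C(2k + t + 1, t + 2) (a binomial coefficient) such that all vertices of N have the same set S of neighbors within I_0 ∪ I_r, where |S ∩ I_0| ≤ 1 and |S ∩ I_r| ≤ 1. Then there exists a token-jumping reconfiguration sequence from I_0 to I_r. -/

import Mathlib

/-- `I` is an independent set of `G` (as a finset of vertices). -/
def IsIndepFinset {V : Type*} (G : SimpleGraph V) (I : Finset V) : Prop :=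
  ∀ u ∈ I, ∀ v ∈ I, ¬ G.Adj u v

/-- One token jump: exactly one token moves from `u ∈ I` to `v ∉ I`. -/
def TJStep {V : Type*} [DecidableEq V] (I J : Finset V) : Prop :=
  ∃ u v, u ∈ I ∧ v ∉ I ∧ I \ J = {u} ∧ J \ I = {v}

/-- `f 0, f 1, …, f ℓ` is a token-jumping reconfiguration sequence from `I` to `J`
in `G`, all of whose members are independent sets of cardinality `k`. -/
def TJSeq {V : Type*} [DecidableEq V] (G : SimpleGraph V) (k : ℕ)
    (I J : Finset V) (ℓ : ℕ) (f : ℕ → Finset V) : Prop :=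
  f 0 = I ∧ f ℓ = J ∧
  (∀ i ≤ ℓ, IsIndepFinset G (f i) ∧ (f i).card = k) ∧
  (∀ i < ℓ, TJStep (f i) (f (i + 1)))

/-- There is a token-jumping reconfiguration sequence from `I` to `J` in `G`. -/
def TJReachable {V : Type*} [DecidableEq V] (G : SimpleGraph V) (k : ℕ)
    (I J : Finset V) : Prop :=
  ∃ ℓ f, TJSeq G k I J ℓ f

/-- There is a token-jumping reconfiguration sequence from `I` to `J` in the
subgraph of `G` induced on the vertex set `W` (equivalently: a sequence in `G`
all of whose members are contained in `W`). -/
def TJReachableWithin {V : Type*} [DecidableEq V] (G : SimpleGraph V) (k : ℕ)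
    (I J : Finset V) (W : Finset V) : Prop :=
  ∃ ℓ f, TJSeq G k I J ℓ f ∧ ∀ i ≤ ℓ, f i ⊆ W

/-- `G` contains the complete bipartite graph `K_{p,q}` as a subgraph. -/
def ContainsKpq {V : Type*} (G : SimpleGraph V) (p q : ℕ) : Prop :=
  ∃ X Y : Finset V, Disjoint X Y ∧ X.card = p ∧ Y.card = q ∧
    ∀ x ∈ X, ∀ y ∈ Y, G.Adj x y

section Aux
set_option linter.unusedSectionVars false
variable {V : Type*} [DecidableEq V] {G : SimpleGraph V} [DecidableRel G.Adj] {k : ℕ}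

lemma TJStep.symm' {I J : Finset V} (h : TJStep I J) : TJStep J I := by
  obtain ⟨u, v, hu, hv, hIJ, hJI⟩ := h
  have hvJ : v ∈ J := (Finset.mem_sdiff.1 (hJI ▸ Finset.mem_singleton_self v)).1
  have huJ : u ∉ J := (Finset.mem_sdiff.1 (hIJ ▸ Finset.mem_singleton_self u)).2
  exact ⟨v, u, hvJ, huJ, hJI, hIJ⟩

lemma tj_refl {A : Finset V} (hA : IsIndepFinset G A) (hAk : A.card = k) :
    TJReachable G k A A :=
  ⟨0, fun _ => A, rfl, rfl, fun _ _ => ⟨hA, hAk⟩, fun i hi => absurd hi (Nat.not_lt_zero i)⟩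

lemma tj_cons {A A' B : Finset V} (hA : IsIndepFinset G A) (hAk : A.card = k)
    (hstep : TJStep A A') (h : TJReachable G k A' B) : TJReachable G k A B := by
  obtain ⟨ℓ, f, h0, hl, hall, hsteps⟩ := h
  refine ⟨ℓ + 1, fun i => if i = 0 then A else f (i - 1), by simp, by simp [hl], ?_, ?_⟩
  · intro i hi
    rcases Nat.eq_zero_or_pos i with rfl | hpos
    · simpa using ⟨hA, hAk⟩
    · obtain ⟨j, rfl⟩ : ∃ j, i = j + 1 := ⟨i - 1, by omega⟩
      simp only [Nat.succ_ne_zero, if_false, Nat.add_sub_cancel]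
      exact hall j (by omega)
  · intro i hi
    rcases Nat.eq_zero_or_pos i with rfl | hpos
    · simpa [h0] using hstep
    · obtain ⟨j, rfl⟩ : ∃ j, i = j + 1 := ⟨i - 1, by omega⟩
      simp only [Nat.succ_ne_zero, if_false, Nat.add_sub_cancel]
      exact hsteps j (by omega)

lemma tj_trans {A B C : Finset V} (h1 : TJReachable G k A B) (h2 : TJReachable G k B C) :
    TJReachable G k A C := by
  obtain ⟨ℓ1, f1, h10, h1l, h1all, h1steps⟩ := h1
  obtain ⟨ℓ2, f2, h20, h2l, h2all, h2steps⟩ := h2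
  refine ⟨ℓ1 + ℓ2, fun i => if i < ℓ1 then f1 i else f2 (i - ℓ1), ?_, ?_, ?_, ?_⟩
  · rcases Nat.eq_zero_or_pos ℓ1 with rfl | h
    · simpa using h20.trans (h1l ▸ h10.symm ▸ rfl)
    · simpa [h] using h10
  · have : ¬ (ℓ1 + ℓ2 < ℓ1) := by omega
    simp [this, h2l]
  · intro i hi
    by_cases h : i < ℓ1
    · simpa [h] using h1all i (by omega)
    · simpa [h] using h2all (i - ℓ1) (by omega)
  · intro i hi
    by_cases h : i < ℓ1
    · by_cases h' : i + 1 < ℓ1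
      · simpa [h, h'] using h1steps i h
      · have hi1 : i + 1 = ℓ1 := by omega
        have : f2 (i + 1 - ℓ1) = f1 (i + 1) := by
          rw [hi1, Nat.sub_self, h20, ← h1l]
        have h0 : f2 0 = f1 (i + 1) := by rw [h20, ← h1l, hi1]
        simpa [h, h', this, h0] using h1steps i h
    · have h' : ¬ (i + 1 < ℓ1) := by omega
      have : i + 1 - ℓ1 = (i - ℓ1) + 1 := by omega
      simp only [h, h', if_false, this]
      exact h2steps (i - ℓ1) (by omega)

lemma tj_symm {A B : Finset V} (h : TJReachable G k A B) : TJReachable G k B A := by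
  obtain ⟨ℓ, f, h0, hl, hall, hsteps⟩ := h
  refine ⟨ℓ, fun i => f (ℓ - i), by simpa, by simpa using h0, ?_, ?_⟩
  · intro i hi; exact hall (ℓ - i) (by omega)
  · intro i hi
    have h1 : ℓ - i = (ℓ - (i + 1)) + 1 := by omega
    show TJStep (f (ℓ - i)) (f (ℓ - (i + 1)))
    rw [h1]
    exact (hsteps (ℓ - (i + 1)) (by omega)).symm'

/-- Moving tokens one at a time when there are no edges between `A \ B` and `B`. -/
lemma tj_move_no_edges : ∀ n (A B : Finset V), (A \ B).card ≤ n →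
    IsIndepFinset G A → IsIndepFinset G B → A.card = k → B.card = k →
    (∀ x ∈ A \ B, ∀ y ∈ B, ¬ G.Adj x y) → TJReachable G k A B := by
  intro n
  induction n with
  | zero =>
    intro A B hcard hA hB hAk hBk _
    have hsub : A ⊆ B := by
      intro x hx
      by_contra hxB
      have : x ∈ A \ B := Finset.mem_sdiff.2 ⟨hx, hxB⟩
      have := Finset.card_pos.2 ⟨x, this⟩; omega
    have : A = B := Finset.eq_of_subset_of_card_le hsub (by omega)
    exact this ▸ tj_refl hA hAk
  | succ n ih =>
    intro A B hcard hA hB hAk hBk hAB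
    rcases Finset.eq_empty_or_nonempty (A \ B) with hemp | ⟨x, hx⟩
    · have hsub : A ⊆ B := fun z hz => by
        by_contra hzB; exact absurd (Finset.mem_sdiff.2 ⟨hz, hzB⟩) (hemp ▸ Finset.notMem_empty z)
      have : A = B := Finset.eq_of_subset_of_card_le hsub (by omega)
      exact this ▸ tj_refl hA hAk
    · have hBA : (B \ A).Nonempty := by
        rw [← Finset.card_pos, ← Finset.card_sdiff_comm (hAk.trans hBk.symm)]
        exact Finset.card_pos.2 ⟨x, hx⟩
      obtain ⟨y, hy⟩ := hBA
      have hxA : x ∈ A := (Finset.mem_sdiff.1 hx).1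
      have hxB : x ∉ B := (Finset.mem_sdiff.1 hx).2
      have hyB : y ∈ B := (Finset.mem_sdiff.1 hy).1
      have hyA : y ∉ A := (Finset.mem_sdiff.1 hy).2
      set A' : Finset V := insert y (A.erase x) with hA'def
      have hyA' : y ∉ A.erase x := fun h => hyA (Finset.mem_of_mem_erase h)
      have hA'card : A'.card = k := by
        rw [hA'def, Finset.card_insert_of_notMem hyA', Finset.card_erase_of_mem hxA]
        have : 1 ≤ A.card := Finset.card_pos.2 ⟨x, hxA⟩
        omega
      have hA'indep : IsIndepFinset G A' := by
        intro u hu v hv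
        rcases Finset.mem_insert.1 hu with rfl | hu' <;>
          rcases Finset.mem_insert.1 hv with rfl | hv'
        · exact G.irrefl
        · -- u = y ∈ B, v ∈ A.erase x
          intro hadj
          by_cases hvB : v ∈ B
          · exact hB u hyB v hvB hadj
          · exact hAB v (Finset.mem_sdiff.2 ⟨Finset.mem_of_mem_erase hv', hvB⟩) u hyB hadj.symm
        · intro hadj
          by_cases huB : u ∈ B
          · exact hB u huB v hyB hadj
          · exact hAB u (Finset.mem_sdiff.2 ⟨Finset.mem_of_mem_erase hu', huB⟩) v hyB hadj
        · exact hA u (Finset.mem_of_mem_erase hu') v (Finset.mem_of_mem_erase hv')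
      have hstep : TJStep A A' := by
        refine ⟨x, y, hxA, hyA, ?_, ?_⟩
        · ext z
          simp only [Finset.mem_sdiff, hA'def, Finset.mem_insert, Finset.mem_erase,
            Finset.mem_singleton]
          constructor
          · rintro ⟨hzA, hz⟩
            by_contra hne
            exact hz (Or.inr ⟨hne, hzA⟩)
          · rintro rfl
            exact ⟨hxA, fun h => by
              rcases h with rfl | ⟨hne, _⟩
              · exact hyA hxA
              · exact hne rfl⟩
        · ext z
          simp only [Finset.mem_sdiff, hA'def, Finset.mem_insert, Finset.mem_erase,
            Finset.mem_singleton]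
          constructor
          · rintro ⟨hz, hzA⟩
            rcases hz with rfl | ⟨_, hzA'⟩
            · rfl
            · exact absurd hzA' hzA
          · rintro rfl
            exact ⟨Or.inl rfl, hyA⟩
      have hA'B : A' \ B ⊆ (A \ B).erase x := by
        intro z hz
        obtain ⟨hz1, hz2⟩ := Finset.mem_sdiff.1 hz
        rcases Finset.mem_insert.1 hz1 with rfl | hz1'
        · exact absurd hyB hz2
        · exact Finset.mem_erase.2 ⟨(Finset.mem_erase.1 hz1').1,
            Finset.mem_sdiff.2 ⟨Finset.mem_of_mem_erase hz1', hz2⟩⟩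
      have hA'Bcard : (A' \ B).card ≤ n := by
        have h1 := Finset.card_le_card hA'B
        have h2 : ((A \ B).erase x).card = (A \ B).card - 1 := Finset.card_erase_of_mem hx
        omega
      refine tj_cons hA hAk hstep (ih A' B hA'Bcard hA'indep hB hA'card hBk ?_)
      intro z hz w hw
      have := hA'B hz
      exact hAB z (Finset.mem_of_mem_erase this) w hw

/-- Moving tokens when at most one special vertex `a` of `A \ B` has neighbours in `B \ A`. -/
lemma tj_move_special {A B : Finset V} (a : V)
    (hA : IsIndepFinset G A) (hB : IsIndepFinset G B) (hAk : A.card = k) (hBk : B.card = k)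
    (h : ∀ x ∈ A \ B, ∀ y ∈ B \ A, G.Adj x y → x = a) : TJReachable G k A B := by
  by_cases ha : a ∈ A \ B
  · rcases Finset.eq_empty_or_nonempty (B \ A) with hemp | ⟨y, hy⟩
    · have hsub : B ⊆ A := fun z hz => by
        by_contra hzA; exact absurd (Finset.mem_sdiff.2 ⟨hz, hzA⟩) (hemp ▸ Finset.notMem_empty z)
      have heq : B = A := Finset.eq_of_subset_of_card_le hsub (by omega)
      rw [heq]
      exact tj_refl hA hAk
    · have haA : a ∈ A := (Finset.mem_sdiff.1 ha).1
      have haB : a ∉ B := (Finset.mem_sdiff.1 ha).2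
      have hyB : y ∈ B := (Finset.mem_sdiff.1 hy).1
      have hyA : y ∉ A := (Finset.mem_sdiff.1 hy).2
      set A' : Finset V := insert y (A.erase a) with hA'def
      have hyA' : y ∉ A.erase a := fun hh => hyA (Finset.mem_of_mem_erase hh)
      have hA'card : A'.card = k := by
        rw [hA'def, Finset.card_insert_of_notMem hyA', Finset.card_erase_of_mem haA]
        have : 1 ≤ A.card := Finset.card_pos.2 ⟨a, haA⟩
        omega
      have hA'indep : IsIndepFinset G A' := by
        intro u hu v hv
        rcases Finset.mem_insert.1 hu with rfl | hu' <;>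
          rcases Finset.mem_insert.1 hv with rfl | hv'
        · exact G.irrefl
        · intro hadj
          by_cases hvB : v ∈ B
          · exact hB u hyB v hvB hadj
          · have hvA : v ∈ A := Finset.mem_of_mem_erase hv'
            have hvne : v ≠ a := (Finset.mem_erase.1 hv').1
            exact hvne (h v (Finset.mem_sdiff.2 ⟨hvA, hvB⟩) u hy hadj.symm)
        · intro hadj
          by_cases huB : u ∈ B
          · exact hB u huB v hyB hadj
          · have huA : u ∈ A := Finset.mem_of_mem_erase hu'
            have hune : u ≠ a := (Finset.mem_erase.1 hu').1
            exact hune (h u (Finset.mem_sdiff.2 ⟨huA, huB⟩) v hy hadj)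
        · exact hA u (Finset.mem_of_mem_erase hu') v (Finset.mem_of_mem_erase hv')
      have hstep : TJStep A A' := by
        refine ⟨a, y, haA, hyA, ?_, ?_⟩
        · ext z
          simp only [Finset.mem_sdiff, hA'def, Finset.mem_insert, Finset.mem_erase,
            Finset.mem_singleton]
          constructor
          · rintro ⟨hzA, hz⟩
            by_contra hne
            exact hz (Or.inr ⟨hne, hzA⟩)
          · rintro rfl
            exact ⟨haA, fun hh => by
              rcases hh with rfl | ⟨hne, _⟩
              · exact hyA haA
              · exact hne rfl⟩
        · ext z
          simp only [Finset.mem_sdiff, hA'def, Finset.mem_insert, Finset.mem_erase,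
            Finset.mem_singleton]
          constructor
          · rintro ⟨hz, hzA⟩
            rcases hz with rfl | ⟨_, hzA'⟩
            · rfl
            · exact absurd hzA' hzA
          · rintro rfl
            exact ⟨Or.inl rfl, hyA⟩
      refine tj_cons hA hAk hstep (tj_move_no_edges (A' \ B).card A' B le_rfl hA'indep hB
        hA'card hBk ?_)
      intro z hz w hw
      obtain ⟨hz1, hz2⟩ := Finset.mem_sdiff.1 hz
      rcases Finset.mem_insert.1 hz1 with rfl | hz1'
      · exact absurd hyB hz2
      · intro hadj
        have hzA : z ∈ A := Finset.mem_of_mem_erase hz1'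
        have hzne : z ≠ a := (Finset.mem_erase.1 hz1').1
        by_cases hwA : w ∈ A
        · exact hA z hzA w hwA hadj
        · exact hzne (h z (Finset.mem_sdiff.2 ⟨hzA, hz2⟩) w (Finset.mem_sdiff.2 ⟨hw, hwA⟩) hadj)
  · refine tj_move_no_edges (A \ B).card A B le_rfl hA hB hAk hBk ?_
    intro x hx y hyB hadj
    by_cases hyA : y ∈ A
    · exact hA x (Finset.mem_sdiff.1 hx).1 y hyA hadj
    · exact ha ((h x hx y (Finset.mem_sdiff.2 ⟨hyB, hyA⟩) hadj) ▸ hx)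

/-- Erdős–Szekeres Ramsey bound. -/
lemma ramsey_finset : ∀ (n a b : ℕ), a + b ≤ n → ∀ (W : Finset V),
    (a + b).choose a ≤ W.card →
    (∃ C ⊆ W, C.card = a + 1 ∧ ∀ x ∈ C, ∀ y ∈ C, x ≠ y → G.Adj x y) ∨
    (∃ D ⊆ W, D.card = b + 1 ∧ IsIndepFinset G D) := by
  intro n
  induction n with
  | zero =>
    intro a b hab W hW
    obtain ⟨rfl, rfl⟩ : a = 0 ∧ b = 0 := by omega
    have hWpos : 0 < W.card := lt_of_lt_of_le (Nat.choose_pos (Nat.le_add_right 0 0)) hW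
    obtain ⟨w, hw⟩ := Finset.card_pos.1 hWpos
    exact Or.inl ⟨{w}, Finset.singleton_subset_iff.2 hw, Finset.card_singleton w,
      fun x hx y hy hne => absurd (by
        rw [Finset.mem_singleton] at hx hy; rw [hx, hy]) hne⟩
  | succ n ih =>
    intro a b hab W hW
    rcases Nat.eq_zero_or_pos a with rfl | hapos
    · have hWpos : 0 < W.card := lt_of_lt_of_le (Nat.choose_pos (Nat.le_add_right 0 b)) hW
      obtain ⟨w, hw⟩ := Finset.card_pos.1 hWpos
      exact Or.inl ⟨{w}, Finset.singleton_subset_iff.2 hw, Finset.card_singleton w,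
        fun x hx y hy hne => absurd (by
          rw [Finset.mem_singleton] at hx hy; rw [hx, hy]) hne⟩
    rcases Nat.eq_zero_or_pos b with rfl | hbpos
    · have hWpos : 0 < W.card := lt_of_lt_of_le (Nat.choose_pos (Nat.le_add_right a 0)) hW
      obtain ⟨w, hw⟩ := Finset.card_pos.1 hWpos
      refine Or.inr ⟨{w}, Finset.singleton_subset_iff.2 hw, Finset.card_singleton w, ?_⟩
      intro x hx y hy
      rw [Finset.mem_singleton] at hx hy
      rw [hx, hy]; exact G.irrefl
    obtain ⟨a', rfl⟩ : ∃ a', a = a' + 1 := ⟨a - 1, by omega⟩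
    obtain ⟨b', rfl⟩ : ∃ b', b = b' + 1 := ⟨b - 1, by omega⟩
    have hchoose : (a' + 1 + (b' + 1)).choose (a' + 1)
        = (a' + (b' + 1)).choose a' + (a' + 1 + b').choose (a' + 1) := by
      have h1 : a' + 1 + (b' + 1) = (a' + 1 + b') + 1 := by omega
      rw [h1, Nat.choose_succ_succ]
      congr 2
      omega
    have hWne : W.Nonempty := Finset.card_pos.1
      (lt_of_lt_of_le (Nat.choose_pos (by omega)) hW)
    obtain ⟨v, hv⟩ := hWne
    set W1 : Finset V := (W.erase v).filter (fun w => G.Adj v w) with hW1def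
    set W2 : Finset V := (W.erase v).filter (fun w => ¬ G.Adj v w) with hW2def
    have hsplit : W1.card + W2.card = W.card - 1 := by
      rw [hW1def, hW2def, Finset.card_filter_add_card_filter_not,
        Finset.card_erase_of_mem hv]
    have hcase : (a' + (b' + 1)).choose a' ≤ W1.card ∨ (a' + 1 + b').choose (a' + 1) ≤ W2.card := by
      by_contra hcon
      push_neg at hcon
      omega
    rcases hcase with hc1 | hc2
    · rcases ih a' (b' + 1) (by omega) W1 hc1 with ⟨C, hCsub, hCcard, hCcl⟩ | hind
      · refine Or.inl ⟨insert v C, ?_, ?_, ?_⟩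
        · intro z hz
          rcases Finset.mem_insert.1 hz with rfl | hz'
          · exact hv
          · exact Finset.mem_of_mem_erase (Finset.mem_of_mem_filter z (hCsub hz'))
        · have hvC : v ∉ C := fun hh =>
            (Finset.mem_erase.1 (Finset.mem_of_mem_filter v (hCsub hh))).1 rfl
          rw [Finset.card_insert_of_notMem hvC, hCcard]
        · intro x hx y hy hne
          rcases Finset.mem_insert.1 hx with rfl | hx' <;>
            rcases Finset.mem_insert.1 hy with rfl | hy'
          · exact absurd rfl hne
          · exact (Finset.mem_filter.1 (hCsub hy')).2
          · exact ((Finset.mem_filter.1 (hCsub hx')).2).symm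
          · exact hCcl x hx' y hy' hne
      · obtain ⟨D, hDsub, hDcard, hDind⟩ := hind
        exact Or.inr ⟨D, fun z hz =>
          Finset.mem_of_mem_erase (Finset.mem_of_mem_filter z (hDsub hz)), hDcard, hDind⟩
    · rcases ih (a' + 1) b' (by omega) W2 hc2 with hcl | ⟨D, hDsub, hDcard, hDind⟩
      · obtain ⟨C, hCsub, hCcard, hCcl⟩ := hcl
        exact Or.inl ⟨C, fun z hz =>
          Finset.mem_of_mem_erase (Finset.mem_of_mem_filter z (hCsub hz)), hCcard, hCcl⟩
      · refine Or.inr ⟨insert v D, ?_, ?_, ?_⟩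
        · intro z hz
          rcases Finset.mem_insert.1 hz with rfl | hz'
          · exact hv
          · exact Finset.mem_of_mem_erase (Finset.mem_of_mem_filter z (hDsub hz'))
        · have hvD : v ∉ D := fun hh =>
            (Finset.mem_erase.1 (Finset.mem_of_mem_filter v (hDsub hh))).1 rfl
          rw [Finset.card_insert_of_notMem hvD, hDcard]
        · intro x hx y hy
          rcases Finset.mem_insert.1 hx with rfl | hx' <;>
            rcases Finset.mem_insert.1 hy with rfl | hy'
          · exact G.irrefl
          · exact (Finset.mem_filter.1 (hDsub hy')).2
          · exact fun hadj => (Finset.mem_filter.1 (hDsub hx')).2 hadj.symm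
          · exact hDind x hx' y hy'

end Aux

/-- if a large set `N`, disjoint from `I₀ ∪ Iᵣ`, has all its
vertices sharing the same neighborhood `S` inside `I₀ ∪ Iᵣ` with
`|S ∩ I₀| ≤ 1` and `|S ∩ Iᵣ| ≤ 1`, then `I₀` can be reconfigured into `Iᵣ`. -/

theorem large_class_gives_sequence {V : Type*} [Fintype V] [DecidableEq V]
    (G : SimpleGraph V) [DecidableRel G.Adj] (t k : ℕ) (ht : 3 ≤ t) (hk : 1 ≤ k)
    (hforb : ¬ ContainsKpq G 3 t) (I0 Ir : Finset V)
    (hI0 : IsIndepFinset G I0) (hIr : IsIndepFinset G Ir)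
    (hI0k : I0.card = k) (hIrk : Ir.card = k)
    (N : Finset V) (hNdisj : Disjoint N (I0 ∪ Ir))
    (hNcard : (2 * k + t + 1).choose (t + 2) ≤ N.card)
    (S : Finset V)
    (hS : ∀ v ∈ N, (I0 ∪ Ir).filter (fun u => G.Adj v u) = S)
    (hS0 : (S ∩ I0).card ≤ 1) (hSr : (S ∩ Ir).card ≤ 1) :
    TJReachable G k I0 Ir := by
  -- Step 1: `N` contains an independent set of size `k` (via Ramsey; a clique of
  -- size `t + 3` would give a `K_{3,t}` subgraph).
  have hram := ramsey_finset (G := G) (2 * k + t + 1) (t + 2) (2 * k - 1) (by omega) N (by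
    have h1 : t + 2 + (2 * k - 1) = 2 * k + t + 1 := by omega
    rw [h1]; exact hNcard)
  have hMex : ∃ M ⊆ N, M.card = k ∧ IsIndepFinset G M := by
    rcases hram with ⟨C, hCsub, hCcard, hCcl⟩ | ⟨D, hDsub, hDcard, hDind⟩
    · exfalso
      obtain ⟨X, hXsub, hXcard⟩ := Finset.exists_subset_card_eq (show 3 ≤ C.card by omega)
      obtain ⟨Y, hYsub, hYcard⟩ := Finset.exists_subset_card_eq
        (show t ≤ (C \ X).card by rw [Finset.card_sdiff_of_subset hXsub]; omega)
      refine hforb ⟨X, Y, ?_, hXcard, hYcard, ?_⟩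
      · exact Finset.disjoint_left.2 fun a haX haY => (Finset.mem_sdiff.1 (hYsub haY)).2 haX
      · intro x hx y hy
        have hyC : y ∈ C \ X := hYsub hy
        exact hCcl x (hXsub hx) y (Finset.mem_sdiff.1 hyC).1
          (fun he => (Finset.mem_sdiff.1 hyC).2 (he ▸ hx))
    · obtain ⟨M, hMsub, hMcard⟩ := Finset.exists_subset_card_eq (show k ≤ D.card by omega)
      exact ⟨M, hMsub.trans hDsub, hMcard,
        fun u hu v hv => hDind u (hMsub hu) v (hMsub hv)⟩
  obtain ⟨M, hMN, hMk, hMind⟩ := hMex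
  -- key adjacency fact: any neighbour of a vertex of `M` inside `I0 ∪ Ir` lies in `S`
  have hadjS : ∀ x ∈ I0 ∪ Ir, ∀ y ∈ M, G.Adj x y → x ∈ S := by
    intro x hx y hy hadj
    have : x ∈ (I0 ∪ Ir).filter (fun u => G.Adj y u) :=
      Finset.mem_filter.2 ⟨hx, hadj.symm⟩
    rwa [hS y (hMN hy)] at this
  -- Phase 1 : `I0 → M`
  have hphase1 : TJReachable G k I0 M := by
    by_cases hSI0 : (S ∩ I0).Nonempty
    · refine tj_move_special hSI0.choose hI0 hMind hI0k hMk ?_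
      intro x hx y hy hadj
      have hxS : x ∈ S := hadjS x (Finset.mem_union_left Ir (Finset.mem_sdiff.1 hx).1)
        y (Finset.mem_sdiff.1 hy).1 hadj
      exact Finset.card_le_one.1 hS0 x
        (Finset.mem_inter.2 ⟨hxS, (Finset.mem_sdiff.1 hx).1⟩) hSI0.choose
        hSI0.choose_spec
    · have hI0ne : I0.Nonempty := Finset.card_pos.1 (by omega)
      refine tj_move_special hI0ne.choose hI0 hMind hI0k hMk ?_
      intro x hx y hy hadj
      have hxS : x ∈ S := hadjS x (Finset.mem_union_left Ir (Finset.mem_sdiff.1 hx).1)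
        y (Finset.mem_sdiff.1 hy).1 hadj
      exact absurd ⟨x, Finset.mem_inter.2 ⟨hxS, (Finset.mem_sdiff.1 hx).1⟩⟩ hSI0
  -- Phase 2 : `Ir → M`, then reverse
  have hphase2 : TJReachable G k Ir M := by
    by_cases hSIr : (S ∩ Ir).Nonempty
    · refine tj_move_special hSIr.choose hIr hMind hIrk hMk ?_
      intro x hx y hy hadj
      have hxS : x ∈ S := hadjS x (Finset.mem_union_right I0 (Finset.mem_sdiff.1 hx).1)
        y (Finset.mem_sdiff.1 hy).1 hadj
      exact Finset.card_le_one.1 hSr x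
        (Finset.mem_inter.2 ⟨hxS, (Finset.mem_sdiff.1 hx).1⟩) hSIr.choose
        hSIr.choose_spec
    · have hIrne : Ir.Nonempty := Finset.card_pos.1 (by omega)
      refine tj_move_special hIrne.choose hIr hMind hIrk hMk ?_
      intro x hx y hy hadj
      have hxS : x ∈ S := hadjS x (Finset.mem_union_right I0 (Finset.mem_sdiff.1 hx).1)
        y (Finset.mem_sdiff.1 hy).1 hadj
      exact absurd ⟨x, Finset.mem_inter.2 ⟨hxS, (Finset.mem_sdiff.1 hx).1⟩⟩ hSIr
  exact tj_trans hphase1 (tj_symm hphase2)
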